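/- Let G = (V,E) be a finite directed graph with V = {v_0,...,v_{n-1}}. Define the enlarged vertex set Ṽ = ⋃_i [v_i] where [v_i] has max(indeg(v_i),1) elements ṽ_i^k. For each i with indeg(v_i) > 0, let A_i be a square matrix of size indeg(v_i) whose columns are pairwise orthogonal nonzero vectors, and define L̃ by ⟨ṽ_i^k| L̃ |ṽ_j^l⟩ = ⟨k|A_i|j⟩ if (v_j,v_i) ∈ E and 0 otherwise. Then for any ṽ_i^k, ṽ_j^l with i ≠ j we have ⟨ṽ_i^k| L̃†L̃ |ṽ_j^l⟩ = 0. -/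
import Mathlib


open Matrix Finset

/-- Enlarged-graph Lindblad operator kills moralizing terms: for a directed graph `E` on
`Fin n`, with each vertex `i` replaced by `max (indeg i) 1` copies and
`⟨ṽ_i^k| L̃ |ṽ_j^l⟩ = ⟨k|A_i|j⟩` when `(v_j, v_i) ∈ E` (0 otherwise), where the columns of
`A_i` used for the parents of `v_i` are pairwise orthogonal nonzero vectors, the matrix
`L̃†L̃` vanishes on every pair of copies of distinct vertices. -/
theorem stmt5 (n : ℕ) (E : Fin n → Fin n → Prop) [DecidableRel E]
    (indeg : Fin n → ℕ)
    (hindeg : ∀ i, indeg i = (Finset.univ.filter fun j => E j i).card)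
    (A : (i : Fin n) → Matrix (Fin (max (indeg i) 1)) (Fin n) ℂ)
    (horth : ∀ (i : Fin n) (j j' : Fin n), E j i → E j' i → j ≠ j' →
      ∑ k, star (A i k j) * A i k j' = 0)
    (hnonzero : ∀ (i : Fin n) (j : Fin n), E j i → (fun k => A i k j) ≠ 0)
    (L : Matrix ((i : Fin n) × Fin (max (indeg i) 1)) ((i : Fin n) × Fin (max (indeg i) 1)) ℂ)
    (hL : ∀ (i : Fin n) (k : Fin (max (indeg i) 1)) (j : Fin n) (l : Fin (max (indeg j) 1)),
      L ⟨i, k⟩ ⟨j, l⟩ = if E j i then A i k j else 0) :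
    ∀ (i j : Fin n) (k : Fin (max (indeg i) 1)) (l : Fin (max (indeg j) 1)),
      i ≠ j → (Lᴴ * L) ⟨i, k⟩ ⟨j, l⟩ = 0 := by
  intro i j k l hij
  rw [Matrix.mul_apply]
  rw [← Finset.univ_sigma_univ, Finset.sum_sigma]
  apply Finset.sum_eq_zero
  intro m _
  rw [show (0 : ℂ) = ∑ p : Fin (max (indeg m) 1), 0 by simp]
  by_cases him : E i m
  · by_cases hjm : E j m
    · have := horth m i j him hjm hij
      simp only [conjTranspose_apply, hL, him, hjm, if_true]
      simpa using this
    · apply Finset.sum_congr rfl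
      intro p _
      simp [conjTranspose_apply, hL, hjm]
  · apply Finset.sum_congr rfl
    intro p _
    simp [conjTranspose_apply, hL, him]
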